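/- Uniform law of large numbers for the kernel class. Let M ⊂ ℝ^p be a nonempty compact set, μ a Borel probability measure on M, K : [0,∞) → ℝ a continuous function, and h > 0 fixed. Let X₁, X₂, … be independent M-valued random variables with law μ. Then, almost surely, sup_{x ∈ M} | (1/n) Σ_{j=1}^n K(‖x − X_j‖/√h) − ∫_M K(‖x − y‖/√h) dμ(y) | → 0 as n → ∞; that is, the class 𝒦_h = { y ↦ K(‖x − y‖/√h) : x ∈ M } is a Glivenko–Cantelli class. -/

import Mathlib

open MeasureTheory Filter Topology

/-- Uniform law of large numbers for the kernel class
`𝒦_h = { y ↦ K(‖x − y‖/√h) : x ∈ M }`: almost surely, the empirical kernel averages converge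
to their expectations uniformly over `x ∈ M`. -/
theorem kernel_class_glivenko_cantelli
    {p : ℕ} {Ω : Type*} [MeasurableSpace Ω] (P : Measure Ω) [IsProbabilityMeasure P]
    (M : Set (EuclideanSpace ℝ (Fin p))) (hMne : M.Nonempty) (hMcpt : IsCompact M)
    (μ : Measure (EuclideanSpace ℝ (Fin p))) [IsProbabilityMeasure μ] (hμM : μ M = 1)
    (K : ℝ → ℝ) (hKcont : ContinuousOn K (Set.Ici 0))
    (h : ℝ) (hh : 0 < h)
    (X : ℕ → Ω → EuclideanSpace ℝ (Fin p))
    (hXmem : ∀ i ω, X i ω ∈ M)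
    (hXmeas : ∀ i, Measurable (X i))
    (hXindep : ProbabilityTheory.iIndepFun X P)
    (hXlaw : ∀ i, Measure.map (X i) P = μ) :
    ∀ᵐ ω ∂P, Tendsto
        (fun n : ℕ => ⨆ x : M,
          |(1 / (n : ℝ)) * ∑ j ∈ Finset.range n,
              K (‖(x : EuclideanSpace ℝ (Fin p)) - X j ω‖ / Real.sqrt h)
            - ∫ y in M, K (‖(x : EuclideanSpace ℝ (Fin p)) - y‖ / Real.sqrt h) ∂μ|)
        atTop (𝓝 0) := by
  haveI : CompactSpace M := isCompact_iff_compactSpace.mp hMcpt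
  haveI : Nonempty M := hMne.to_subtype
  -- the map F : E × M → ℝ
  have hFcont : Continuous (fun q : EuclideanSpace ℝ (Fin p) × M => K (‖(q.2 : EuclideanSpace ℝ (Fin p)) - (q.1 : EuclideanSpace ℝ (Fin p))‖ / Real.sqrt h)) := by
    apply hKcont.comp_continuous
    · fun_prop
    · intro q
      exact Set.mem_Ici.mpr (div_nonneg (norm_nonneg _) (Real.sqrt_nonneg _))
  let F : C(EuclideanSpace ℝ (Fin p) × M, ℝ) := ⟨_, hFcont⟩
  let Φ : C(EuclideanSpace ℝ (Fin p), C(M, ℝ)) := F.curry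
  letI : MeasurableSpace C(M, ℝ) := borel _
  haveI : BorelSpace C(M, ℝ) := ⟨rfl⟩
  -- the C(M,ℝ)-valued random variables
  set Y : ℕ → Ω → C(M, ℝ) := fun i ω => Φ (X i ω) with hY
  have hYsm : ∀ i, StronglyMeasurable (Y i) := fun i =>
    Φ.continuous.comp_stronglyMeasurable (hXmeas i).stronglyMeasurable
  -- bound on M
  obtain ⟨C, hC⟩ := (hMcpt.image Φ.continuous).exists_bound_of_continuousOn continuousOn_id
  have hMmeas : MeasurableSet M := hMcpt.isClosed.measurableSet
  have hbound : ∀ i, ∀ ω, ‖Y i ω‖ ≤ C := fun i ω =>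
    hC _ (Set.mem_image_of_mem _ (hXmem i ω))
  have hYint : Integrable (Y 0) P := by
    refine ⟨(hYsm 0).aestronglyMeasurable, ?_⟩
    exact (hasFiniteIntegral_const C).mono' (Filter.Eventually.of_forall (hbound 0))
  -- identical distribution
  have hident : ∀ i, ProbabilityTheory.IdentDistrib (Y i) (Y 0) P P := by
    intro i
    have hXid : ProbabilityTheory.IdentDistrib (X i) (X 0) P P :=
      ⟨(hXmeas i).aemeasurable, (hXmeas 0).aemeasurable, by rw [hXlaw i, hXlaw 0]⟩
    exact hXid.comp Φ.continuous.measurable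
  -- pairwise independence
  have hindep : Pairwise (Function.onFun (ProbabilityTheory.IndepFun · · P) Y) := by
    intro i j hij
    exact (hXindep.indepFun hij).comp Φ.continuous.measurable Φ.continuous.measurable
  -- strong law
  have hlln := ProbabilityTheory.strong_law_ae Y hYint hindep hident
  -- identify the limit
  have hμres : μ.restrict M = μ := by
    apply Measure.restrict_eq_self_of_ae_mem
    rw [ae_iff]
    have : {a | a ∉ M} = Mᶜ := rfl
    rw [this, measure_compl hMmeas (measure_ne_top _ _), hμM, measure_univ]
    simp
  have hμmem : ∀ᵐ (y : EuclideanSpace ℝ (Fin p)) ∂μ, y ∈ M := by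
    rw [ae_iff]
    have : {a | a ∉ M} = Mᶜ := rfl
    rw [this, measure_compl hMmeas (measure_ne_top _ _), hμM, measure_univ]
    simp
  have hΦint : Integrable Φ μ := by
    refine ⟨Φ.continuous.stronglyMeasurable.aestronglyMeasurable, ?_⟩
    apply (hasFiniteIntegral_const C).mono'
    filter_upwards [hμmem] with y hy
    exact hC _ (Set.mem_image_of_mem _ hy)
  have hlim : (∫ ω, Y 0 ω ∂P) = ∫ y, Φ y ∂μ := by
    rw [← hXlaw 0]
    exact (integral_map (hXmeas 0).aemeasurable
      Φ.continuous.stronglyMeasurable.aestronglyMeasurable).symm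
  have heval : ∀ x : M, (∫ y, Φ y ∂μ) x = ∫ y in M, K (‖(x : EuclideanSpace ℝ (Fin p)) - y‖ / Real.sqrt h) ∂μ := by
    intro x
    rw [hμres]
    have := (ContinuousMap.evalCLM ℝ x).integral_comp_comm hΦint
    exact this.symm
  filter_upwards [hlln] with ω hω
  rw [tendsto_iff_norm_sub_tendsto_zero] at hω
  simp only [hlim] at hω
  convert hω using 2 with n
  rw [ContinuousMap.norm_eq_iSup_norm]
  congr 1
  funext x
  rw [Real.norm_eq_abs]
  congr 1
  simp only [ContinuousMap.sub_apply, ContinuousMap.smul_apply, ContinuousMap.coe_sum,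
    Finset.sum_apply, smul_eq_mul, one_div, heval x]
  rfl
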